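/- For probability densities p, q on Θ and M ≥ 1, D_4(p,q,M) = KL( p(θ_0)∏_{k=1}^M q(θ_k) ‖ (1/(M+1)) Σ_{m=0}^M p(θ_m)∏_{k≠m} q(θ_k) ) equals 0 if and only if p = q almost everywhere. -/

import Mathlib

open MeasureTheory Real

noncomputable section

/-- Kullback–Leibler divergence between densities `p` and `q` w.r.t. a base measure `μ`. -/
def klF {α : Type*} [MeasurableSpace α] (μ : Measure α) (p q : α → ℝ) : ℝ :=
  ∫ x, p x * Real.log (p x / q x) ∂μ

/-- The density `θ ↦ p(θ_0) ∏_{k=1}^M q(θ_k)` on `Θ^{M+1}`. -/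
def numDens {Θ : Type*} (p q : Θ → ℝ) (M : ℕ) : (Fin (M + 1) → Θ) → ℝ :=
  fun v => p (v 0) * ∏ k ∈ Finset.univ.erase (0 : Fin (M + 1)), q (v k)

/-- The uniform-mixture density `θ ↦ (1/(M+1)) Σ_m p(θ_m) ∏_{k≠m} q(θ_k)` on `Θ^{M+1}`. -/
def mixDens {Θ : Type*} (p q : Θ → ℝ) (M : ℕ) : (Fin (M + 1) → Θ) → ℝ :=
  fun v => (1 / (M + 1 : ℝ)) *
    ∑ m, p (v m) * ∏ k ∈ Finset.univ.erase m, q (v k)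

/-- The multiclass divergence `D_4(p,q,M)`. -/
def D4 {Θ : Type*} [MeasurableSpace Θ] (μ : Measure Θ) (p q : Θ → ℝ) (M : ℕ) : ℝ :=
  klF (Measure.pi fun _ : Fin (M + 1) => μ) (numDens p q M) (mixDens p q M)

/-! ### Auxiliary lemmas -/

lemma tlogt_aux {t : ℝ} (ht : 0 < t) :
    t - 1 ≤ t * Real.log t ∧ (t * Real.log t = t - 1 → t = 1) := by
  by_cases h1 : t = 1
  · subst h1; simp
  · have h2 : 0 < t⁻¹ := inv_pos.mpr ht
    have h3 : t⁻¹ ≠ 1 := by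
      intro h; exact h1 (by field_simp at h; linarith)
    have h4 := Real.log_lt_sub_one_of_pos h2 h3
    rw [Real.log_inv] at h4
    have h5 : t - 1 < t * Real.log t := by
      have := mul_lt_mul_of_pos_left h4 ht
      have ht' : t * t⁻¹ = 1 := mul_inv_cancel₀ (ne_of_gt ht)
      nlinarith
    exact ⟨le_of_lt h5, fun h => absurd h (by linarith)⟩

lemma gibbs_eq {α : Type*} [MeasurableSpace α] (ν : Measure α) (h g : α → ℝ)
    (hh : Integrable h ν) (hg : Integrable g ν)
    (h0 : ∀ x, 0 ≤ h x) (g0 : ∀ x, 0 ≤ g x)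
    (hzero : ∀ x, g x = 0 → h x = 0)
    (heq : ∫ x, h x ∂ν = ∫ x, g x ∂ν)
    (hint : Integrable (fun x => h x * Real.log (h x / g x)) ν)
    (hKL : ∫ x, h x * Real.log (h x / g x) ∂ν = 0) :
    h =ᵐ[ν] g := by
  set φ : α → ℝ := fun x => (h x * Real.log (h x / g x) - h x) + g x with hφ
  have hkey : ∀ x, 0 ≤ φ x ∧ (φ x = 0 → h x = g x) := by
    intro x
    rcases eq_or_lt_of_le (g0 x) with hgx | hgx
    · have hhx : h x = 0 := hzero x hgx.symm
      simp [hφ, hhx, ← hgx]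
    · rcases eq_or_lt_of_le (h0 x) with hhx | hhx
      · constructor
        · simp [hφ, ← hhx]; linarith
        · intro he; simp [hφ, ← hhx] at he; exfalso; linarith
      · set t := h x / g x with htdef
        have ht : 0 < t := div_pos hhx hgx
        have hxt : h x = g x * t := by rw [htdef, mul_div_assoc', mul_div_cancel_left₀ _ (ne_of_gt hgx)]
        have hlog : Real.log (h x / g x) = Real.log t := rfl
        have hφx : φ x = g x * (t * Real.log t - (t - 1)) := by
          rw [hφ]; simp only; rw [hlog, hxt]; ring
        obtain ⟨hle, heq1⟩ := tlogt_aux ht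
        constructor
        · rw [hφx]; exact mul_nonneg (le_of_lt hgx) (by linarith)
        · intro he
          rw [hφx] at he
          rcases mul_eq_zero.mp he with h' | h'
          · exfalso; linarith
          · have : t = 1 := heq1 (by linarith)
            rw [hxt, this, mul_one]
  have hφint : Integrable φ ν := (hint.sub hh).add hg
  have hφ0 : ∫ x, φ x ∂ν = 0 := by
    have e1 : ∫ x, φ x ∂ν = (∫ x, (h x * Real.log (h x / g x) - h x) ∂ν) + ∫ x, g x ∂ν :=
      integral_add (hint.sub hh) hg
    rw [e1, integral_sub hint hh, hKL, heq]
    ring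
  have hφae : φ =ᵐ[ν] 0 :=
    (integral_eq_zero_iff_of_nonneg (fun x => (hkey x).1) hφint).mp hφ0
  filter_upwards [hφae] with x hx
  exact (hkey x).2 hx

lemma integrable_pi_prod {Θ : Type*} [MeasurableSpace Θ] (μ : Measure Θ) [SigmaFinite μ]
    {n : ℕ} (f : Fin n → Θ → ℝ) (hf : ∀ i, Integrable (f i) μ) :
    Integrable (fun v : Fin n → Θ => ∏ i, f i (v i)) (Measure.pi fun _ => μ) := by
  letI : MeasureSpace Θ := ⟨μ⟩
  exact MeasureTheory.Integrable.fintype_prod hf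

lemma integral_pi_prod {Θ : Type*} [MeasurableSpace Θ] (μ : Measure Θ) [SigmaFinite μ]
    {n : ℕ} (f : Fin n → Θ → ℝ) :
    ∫ v, ∏ i, f i (v i) ∂(Measure.pi fun _ : Fin n => μ) = ∏ i, ∫ x, f i x ∂μ := by
  letI : MeasureSpace Θ := ⟨μ⟩
  exact MeasureTheory.integral_fintype_prod_eq_prod f

lemma term_indicator_eq_prod {Θ : Type*} (p q : Θ → ℝ) (M : ℕ) (m : Fin (M + 1)) (A : Set Θ)
    (v : Fin (M + 1) → Θ) :
    Set.indicator ((fun v : Fin (M + 1) → Θ => v 0) ⁻¹' A)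
      (fun v => p (v m) * ∏ k ∈ Finset.univ.erase m, q (v k)) v
    = ∏ i, (fun i x => if i = (0 : Fin (M + 1)) then
        Set.indicator A (if m = 0 then p else q) x
        else if i = m then p x else q x) i (v i) := by
  by_cases hv : v 0 ∈ A
  · rw [Set.indicator_of_mem (by simpa using hv)]
    rw [← Finset.mul_prod_erase Finset.univ _ (Finset.mem_univ m)]
    congr 1
    · by_cases hm : m = 0
      · subst hm; simp [Set.indicator_of_mem hv]
      · simp [hm, Set.indicator_of_mem hv]
    · apply Finset.prod_congr rfl
      intro k hk
      have hkm : k ≠ m := Finset.ne_of_mem_erase hk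
      by_cases hk0 : k = 0
      · subst hk0
        have hm0 : m ≠ 0 := fun h => hkm h.symm
        simp [hm0, Set.indicator_of_mem hv]
      · simp [hk0, hkm]
  · rw [Set.indicator_of_notMem (by simpa using hv)]
    symm
    apply Finset.prod_eq_zero (Finset.mem_univ (0 : Fin (M + 1)))
    simp [Set.indicator_of_notMem hv]

lemma term_setIntegral {Θ : Type*} [MeasurableSpace Θ] (μ : Measure Θ) [SigmaFinite μ]
    (p q : Θ → ℝ) (hp : Integrable p μ) (hq : Integrable q μ)
    (hp1 : ∫ x, p x ∂μ = 1) (hq1 : ∫ x, q x ∂μ = 1) (M : ℕ) (m : Fin (M + 1))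
    (A : Set Θ) (hA : MeasurableSet A) :
    Integrable (Set.indicator ((fun v : Fin (M + 1) → Θ => v 0) ⁻¹' A)
        (fun v => p (v m) * ∏ k ∈ Finset.univ.erase m, q (v k))) (Measure.pi fun _ => μ) ∧
    ∫ v, Set.indicator ((fun v : Fin (M + 1) → Θ => v 0) ⁻¹' A)
        (fun v => p (v m) * ∏ k ∈ Finset.univ.erase m, q (v k)) v ∂(Measure.pi fun _ => μ)
      = if m = 0 then ∫ x in A, p x ∂μ else ∫ x in A, q x ∂μ := by
  set g : Fin (M + 1) → Θ → ℝ := fun i x => if i = (0 : Fin (M + 1)) then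
      Set.indicator A (if m = 0 then p else q) x
      else if i = m then p x else q x with hgdef
  have hg : ∀ i, Integrable (g i) μ := by
    intro i
    by_cases hi0 : i = 0
    · subst hi0
      simp only [hgdef, if_pos rfl]
      by_cases hm : m = 0
      · simp only [if_pos hm]; exact hp.indicator hA
      · simp only [if_neg hm]; exact hq.indicator hA
    · by_cases him : i = m
      · simp only [hgdef, if_neg hi0, if_pos him]; exact hp
      · simp only [hgdef, if_neg hi0, if_neg him]; exact hq
  have hfun : Set.indicator ((fun v : Fin (M + 1) → Θ => v 0) ⁻¹' A)
      (fun v => p (v m) * ∏ k ∈ Finset.univ.erase m, q (v k))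
      = fun v => ∏ i, g i (v i) := funext (term_indicator_eq_prod p q M m A)
  constructor
  · rw [hfun]; exact integrable_pi_prod μ g hg
  · rw [hfun, integral_pi_prod μ g]
    rw [← Finset.mul_prod_erase Finset.univ _ (Finset.mem_univ (0 : Fin (M + 1)))]
    have hrest : ∏ k ∈ Finset.univ.erase (0 : Fin (M + 1)), ∫ x, g k x ∂μ = 1 := by
      apply Finset.prod_eq_one
      intro k hk
      have hk0 : k ≠ 0 := Finset.ne_of_mem_erase hk
      by_cases hkm : k = m
      · simp only [hgdef, if_neg hk0, if_pos hkm]; exact hp1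
      · simp only [hgdef, if_neg hk0, if_neg hkm]; exact hq1
    rw [hrest, mul_one]
    simp only [hgdef, if_pos rfl]
    by_cases hm : m = 0
    · simp only [if_pos hm]; rw [integral_indicator hA]
    · simp only [if_neg hm]; rw [integral_indicator hA]

/-- `D_4(p,q,M) = 0` iff `p = q` almost everywhere. -/
theorem stmt7 {Θ : Type*} [MeasurableSpace Θ] (μ : Measure Θ) [SigmaFinite μ]
    (p q : Θ → ℝ) (M : ℕ) (hM : 1 ≤ M)
    (hpm : Measurable p) (hqm : Measurable q)
    (hp0 : ∀ x, 0 ≤ p x) (hq0 : ∀ x, 0 ≤ q x)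
    (hp1 : ∫ x, p x ∂μ = 1) (hq1 : ∫ x, q x ∂μ = 1)
    (hint : Integrable
      (fun v => numDens p q M v * Real.log (numDens p q M v / mixDens p q M v))
      (Measure.pi fun _ : Fin (M + 1) => μ)) :
    D4 μ p q M = 0 ↔ p =ᵐ[μ] q := by
  have hpint : Integrable p μ := by
    by_contra hc
    rw [integral_undef hc] at hp1
    exact one_ne_zero hp1.symm
  have hqint : Integrable q μ := by
    by_contra hc
    rw [integral_undef hc] at hq1
    exact one_ne_zero hq1.symm
  have hM1 : ((M : ℝ) + 1) ≠ 0 := by positivity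
  constructor
  · -- forward direction
    intro hD
    have huniv : ∀ m : Fin (M + 1),
        Integrable (fun v : Fin (M + 1) → Θ => p (v m) * ∏ k ∈ Finset.univ.erase m, q (v k))
          (Measure.pi fun _ : Fin (M + 1) => μ) ∧
        ∫ v, p (v m) * ∏ k ∈ Finset.univ.erase m, q (v k)
          ∂(Measure.pi fun _ : Fin (M + 1) => μ) = 1 := by
      intro m
      have h := term_setIntegral μ p q hpint hqint hp1 hq1 M m Set.univ MeasurableSet.univ
      rw [Set.preimage_univ, Set.indicator_univ] at h
      refine ⟨h.1, ?_⟩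
      rw [h.2]
      by_cases hm : m = 0
      · rw [if_pos hm, setIntegral_univ, hp1]
      · rw [if_neg hm, setIntegral_univ, hq1]
    have hnum_int : Integrable (numDens p q M) (Measure.pi fun _ : Fin (M + 1) => μ) :=
      (huniv 0).1
    have hnum_integral :
        ∫ v, numDens p q M v ∂(Measure.pi fun _ : Fin (M + 1) => μ) = 1 := (huniv 0).2
    have hmix_int : Integrable (mixDens p q M) (Measure.pi fun _ : Fin (M + 1) => μ) := by
      unfold mixDens
      exact (integrable_finset_sum Finset.univ (fun m _ => (huniv m).1)).const_mul _
    have hmix_integral :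
        ∫ v, mixDens p q M v ∂(Measure.pi fun _ : Fin (M + 1) => μ) = 1 := by
      unfold mixDens
      rw [integral_const_mul, integral_finset_sum Finset.univ (fun m _ => (huniv m).1),
        Finset.sum_congr rfl (fun m _ => (huniv m).2), Finset.sum_const, Finset.card_univ,
        Fintype.card_fin, nsmul_eq_mul, mul_one]
      push_cast
      field_simp
    have hterm0 : ∀ (m : Fin (M + 1)) (v : Fin (M + 1) → Θ),
        0 ≤ p (v m) * ∏ k ∈ Finset.univ.erase m, q (v k) :=
      fun m v => mul_nonneg (hp0 _) (Finset.prod_nonneg fun k _ => hq0 _)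
    have hnum0 : ∀ v, 0 ≤ numDens p q M v := fun v => hterm0 0 v
    have hmix0 : ∀ v, 0 ≤ mixDens p q M v := fun v =>
      mul_nonneg (by positivity) (Finset.sum_nonneg fun m _ => hterm0 m v)
    have hz : ∀ v, mixDens p q M v = 0 → numDens p q M v = 0 := by
      intro v hv
      unfold mixDens at hv
      have hc : (1 / ((M : ℝ) + 1)) ≠ 0 := by positivity
      have hs : ∑ m, p (v m) * ∏ k ∈ Finset.univ.erase m, q (v k) = 0 := by
        rcases mul_eq_zero.mp hv with h | h
        · exact absurd h hc
        · exact h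
      exact (Finset.sum_eq_zero_iff_of_nonneg (fun m _ => hterm0 m v)).mp hs 0 (Finset.mem_univ 0)
    have hD' : ∫ v, numDens p q M v * Real.log (numDens p q M v / mixDens p q M v)
        ∂(Measure.pi fun _ : Fin (M + 1) => μ) = 0 := hD
    have haeq : numDens p q M =ᵐ[Measure.pi fun _ : Fin (M + 1) => μ] mixDens p q M :=
      gibbs_eq _ _ _ hnum_int hmix_int hnum0 hmix0 hz
        (by rw [hnum_integral, hmix_integral]) hint hD'
    apply ae_eq_of_forall_setIntegral_eq_of_sigmaFinite
    · intro s _ _; exact hpint.integrableOn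
    · intro s _ _; exact hqint.integrableOn
    · intro A hA _
      have h1 : ∫ v, Set.indicator ((fun v : Fin (M + 1) → Θ => v 0) ⁻¹' A)
          (fun v => p (v 0) * ∏ k ∈ Finset.univ.erase (0 : Fin (M + 1)), q (v k)) v
          ∂(Measure.pi fun _ : Fin (M + 1) => μ) = ∫ x in A, p x ∂μ := by
        have h := (term_setIntegral μ p q hpint hqint hp1 hq1 M 0 A hA).2
        rwa [if_pos rfl] at h
      have hind_int : ∀ m : Fin (M + 1),
          Integrable (Set.indicator ((fun v : Fin (M + 1) → Θ => v 0) ⁻¹' A)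
            (fun v => p (v m) * ∏ k ∈ Finset.univ.erase m, q (v k)))
            (Measure.pi fun _ : Fin (M + 1) => μ) :=
        fun m => (term_setIntegral μ p q hpint hqint hp1 hq1 M m A hA).1
      have h2 : ∫ v, Set.indicator ((fun v : Fin (M + 1) → Θ => v 0) ⁻¹' A)
          (mixDens p q M) v ∂(Measure.pi fun _ : Fin (M + 1) => μ)
          = (1 / ((M : ℝ) + 1)) * ((∫ x in A, p x ∂μ) + M * ∫ x in A, q x ∂μ) := by
        have hpt : ∀ v : Fin (M + 1) → Θ, Set.indicator
            ((fun v : Fin (M + 1) → Θ => v 0) ⁻¹' A) (mixDens p q M) v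
            = (1 / ((M : ℝ) + 1)) * ∑ m, Set.indicator
              ((fun v : Fin (M + 1) → Θ => v 0) ⁻¹' A)
              (fun v => p (v m) * ∏ k ∈ Finset.univ.erase m, q (v k)) v := by
          intro v
          by_cases hv : v ∈ ((fun v : Fin (M + 1) → Θ => v 0) ⁻¹' A)
          · simp only [Set.indicator_of_mem hv]; rfl
          · simp only [Set.indicator_of_notMem hv]
            simp
        simp_rw [hpt]
        rw [integral_const_mul, integral_finset_sum Finset.univ (fun m _ => hind_int m),
          Finset.sum_congr rfl
            (fun m _ => (term_setIntegral μ p q hpint hqint hp1 hq1 M m A hA).2)]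
        congr 1
        rw [← Finset.add_sum_erase _ _ (Finset.mem_univ (0 : Fin (M + 1))), if_pos rfl]
        congr 1
        rw [Finset.sum_congr rfl (fun m hm => if_neg (Finset.ne_of_mem_erase hm)),
          Finset.sum_const, nsmul_eq_mul]
        congr 1
        rw [Finset.card_erase_of_mem (Finset.mem_univ _), Finset.card_univ, Fintype.card_fin]
        simp
      have h12 : ∫ v, Set.indicator ((fun v : Fin (M + 1) → Θ => v 0) ⁻¹' A)
          (fun v => p (v 0) * ∏ k ∈ Finset.univ.erase (0 : Fin (M + 1)), q (v k)) v
          ∂(Measure.pi fun _ : Fin (M + 1) => μ)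
          = ∫ v, Set.indicator ((fun v : Fin (M + 1) → Θ => v 0) ⁻¹' A)
          (mixDens p q M) v ∂(Measure.pi fun _ : Fin (M + 1) => μ) := by
        apply integral_congr_ae
        filter_upwards [haeq] with v hv
        by_cases h : v ∈ ((fun v : Fin (M + 1) → Θ => v 0) ⁻¹' A)
        · rw [Set.indicator_of_mem h, Set.indicator_of_mem h, ← hv]; rfl
        · rw [Set.indicator_of_notMem h, Set.indicator_of_notMem h]
      have hkey : ∫ x in A, p x ∂μ
          = (1 / ((M : ℝ) + 1)) * ((∫ x in A, p x ∂μ) + M * ∫ x in A, q x ∂μ) :=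
        (h1.symm.trans h12).trans h2
      have hMne : (M : ℝ) ≠ 0 := Nat.cast_ne_zero.mpr (by omega)
      have h3 := congrArg (fun z => ((M : ℝ) + 1) * z) hkey
      rw [← mul_assoc, mul_one_div_cancel hM1, one_mul] at h3
      have h4 : (M : ℝ) * (∫ x in A, p x ∂μ) = (M : ℝ) * ∫ x in A, q x ∂μ := by
        ring_nf at h3 ⊢; linarith
      exact mul_left_cancel₀ hMne h4
  · -- reverse direction
    intro hpq
    have hae : ∀ᵐ v ∂(Measure.pi fun _ : Fin (M + 1) => μ), ∀ i, p (v i) = q (v i) := by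
      rw [ae_all_iff]
      intro i
      exact (Measure.tendsto_eval_ae_ae (μ := fun _ : Fin (M + 1) => μ) (i := i)).eventually hpq
    have hzero : ∀ᵐ v ∂(Measure.pi fun _ : Fin (M + 1) => μ),
        numDens p q M v * Real.log (numDens p q M v / mixDens p q M v) = 0 := by
      filter_upwards [hae] with v hv
      have hprod : ∀ m : Fin (M + 1),
          p (v m) * ∏ k ∈ Finset.univ.erase m, q (v k) = ∏ k, q (v k) := by
        intro m
        rw [hv m, Finset.mul_prod_erase Finset.univ (fun k => q (v k)) (Finset.mem_univ m)]
      have hnum : numDens p q M v = ∏ k, q (v k) := hprod 0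
      have hmix : mixDens p q M v = ∏ k, q (v k) := by
        unfold mixDens
        rw [Finset.sum_congr rfl (fun m _ => hprod m), Finset.sum_const, Finset.card_univ,
          Fintype.card_fin, nsmul_eq_mul]
        push_cast
        field_simp
      rw [hnum, hmix]
      by_cases h0 : (∏ k, q (v k)) = 0
      · rw [h0]; ring
      · rw [div_self h0, Real.log_one, mul_zero]
    unfold D4 klF
    exact integral_eq_zero_of_ae hzero
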